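/- Let ε > 0, let δ ∈ (0,1), let Δ be a positive integer, set a = ε/Δ, and let m be an integer satisfying m ≥ Δ + (1/a)·ln(1/((e^a + 1)·δ)) and m ≥ Δ. Let L be the discrete Laplace distribution on ℤ with scale a and center m, and let TLap(c) = L.map (fun η => c + max η 0) be the truncated Laplace mechanism. Then TLap is (ε,δ)-differentially private with respect to counts of sensitivity Δ: for all integers c₁, c₂ with |c₁ − c₂| ≤ Δ and every set O ⊆ ℤ, Pr[TLap(c₁) ∈ O] ≤ e^ε · Pr[TLap(c₂) ∈ O] + δ. -/

import Mathlib

/-- The truncated Laplace mechanism is (ε,δ)-differentially private for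
counting queries of sensitivity Δ. -/
theorem truncatedLaplace_DP
    (ε δ : ℝ) (hε : 0 < ε) (hδ0 : 0 < δ) (hδ1 : δ < 1)
    (Δ : ℤ) (hΔ : 0 < Δ) (a : ℝ) (ha : a = ε / (Δ : ℝ)) (m : ℤ)
    (hm1 : (m : ℝ) ≥ (Δ : ℝ) + (1 / a) * Real.log (1 / ((Real.exp a + 1) * δ)))
    (hm2 : m ≥ Δ)
    (L : PMF ℤ)
    (hL : ∀ x : ℤ, L x =
      ENNReal.ofReal ((Real.exp a - 1) / (Real.exp a + 1) *
        Real.exp (-a * |(x : ℝ) - (m : ℝ)|))) :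
    ∀ c₁ c₂ : ℤ, |c₁ - c₂| ≤ Δ → ∀ O : Set ℤ,
      (L.map (fun η => c₁ + max η 0)).toOuterMeasure O ≤
        ENNReal.ofReal (Real.exp ε) *
          (L.map (fun η => c₂ + max η 0)).toOuterMeasure O +
        ENNReal.ofReal δ := by
  intro c₁ c₂ hc O
  have hΔR : (0:ℝ) < (Δ:ℝ) := by exact_mod_cast hΔ
  have ha0 : 0 < a := by rw [ha]; positivity
  have haΔ : a * (Δ:ℝ) = ε := by rw [ha]; field_simp
  have hE1 : 1 < Real.exp a := by
    rw [show (1:ℝ) = Real.exp 0 by simp]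
    exact Real.exp_lt_exp.mpr ha0
  have hE0 : (0:ℝ) < Real.exp a := Real.exp_pos a
  set p : ℝ := (Real.exp a - 1) / (Real.exp a + 1) with hp
  have hp0 : 0 < p := div_pos (by linarith) (by linarith)
  have hmR : (Δ:ℝ) ≤ (m:ℝ) := by exact_mod_cast hm2
  have hcb := abs_le.mp hc
  have hcR : |((c₁ - c₂ : ℤ):ℝ)| ≤ (Δ:ℝ) := by
    rw [← Int.cast_abs]; exact_mod_cast hc
  rw [PMF.toOuterMeasure_map_apply, PMF.toOuterMeasure_map_apply,
      PMF.toOuterMeasure_apply, PMF.toOuterMeasure_apply]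
  set A₁ := (fun η : ℤ => c₁ + max η 0) ⁻¹' O with hA₁
  set A₂ := (fun η : ℤ => c₂ + max η 0) ⁻¹' O with hA₂
  set S := A₁ ∩ {x : ℤ | Δ ≤ x} with hSdef
  set T := {x : ℤ | x < Δ} with hTdef
  -- pointwise density ratio bound
  have key : ∀ x : ℤ, L x ≤ ENNReal.ofReal (Real.exp ε) * L (x + (c₁ - c₂)) := by
    intro x
    rw [hL, hL, ← ENNReal.ofReal_mul (Real.exp_nonneg ε)]
    apply ENNReal.ofReal_le_ofReal
    rw [show Real.exp ε * (p * Real.exp (-a * |((x + (c₁ - c₂) : ℤ):ℝ) - (m:ℝ)|)) =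
        p * (Real.exp ε * Real.exp (-a * |((x + (c₁ - c₂) : ℤ):ℝ) - (m:ℝ)|)) from by ring,
      ← Real.exp_add]
    apply mul_le_mul_of_nonneg_left _ hp0.le
    apply Real.exp_le_exp.mpr
    have htri : |((x + (c₁ - c₂) : ℤ):ℝ) - (m:ℝ)| ≤ |(x:ℝ) - (m:ℝ)| + |((c₁ - c₂ : ℤ):ℝ)| := by
      push_cast
      calc |(x:ℝ) + ((c₁:ℝ) - c₂) - m| = |((x:ℝ) - m) + ((c₁:ℝ) - c₂)| := by ring_nf
        _ ≤ |(x:ℝ) - m| + |(c₁:ℝ) - c₂| := abs_add_le _ _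
        _ = |(x:ℝ) - m| + |((c₁:ℝ) - c₂)| := rfl
    have h1 : |(x:ℝ) - (m:ℝ)| - |((x + (c₁ - c₂) : ℤ):ℝ) - (m:ℝ)| ≥ -(Δ:ℝ) := by
      have h2 := abs_sub_abs_le_abs_sub ((x:ℝ) + (((c₁ - c₂):ℤ):ℝ) - (m:ℝ)) ((x:ℝ) - (m:ℝ))
      push_cast at htri hcR ⊢
      linarith
    have h3 := mul_le_mul_of_nonneg_left (by linarith : |((x + (c₁ - c₂) : ℤ):ℝ) - (m:ℝ)| - |(x:ℝ) - (m:ℝ)| ≤ (Δ:ℝ)) ha0.le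
    nlinarith [h3]
  -- shifted membership
  have hmem : ∀ x : ℤ, Δ ≤ x → x ∈ A₁ → (x + (c₁ - c₂)) ∈ A₂ := by
    intro x hx hxO
    simp only [hA₁, hA₂, Set.mem_preimage] at hxO ⊢
    have h1 : max x 0 = x := max_eq_left (le_trans hΔ.le hx)
    have h2 : max (x + (c₁ - c₂)) 0 = x + (c₁ - c₂) := max_eq_left (by omega)
    rw [h2]
    rw [h1] at hxO
    have : c₂ + (x + (c₁ - c₂)) = c₁ + x := by ring
    rw [this]
    exact hxO
  -- tail bound
  have hT : ∑' x : ℤ, T.indicator (⇑L) x ≤ ENNReal.ofReal δ := by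
    have hg : Function.Injective (fun k : ℕ => Δ - 1 - (k:ℤ)) := by
      intro i j h
      simp only at h
      omega
    have hrange : Function.support (T.indicator (⇑L)) ⊆ Set.range (fun k : ℕ => Δ - 1 - (k:ℤ)) := by
      intro x hx
      have hxT : x ∈ T := by
        by_contra h
        exact hx (Set.indicator_of_notMem h _)
      have hxlt : x < Δ := hxT
      exact ⟨(Δ - 1 - x).toNat, by simp only; omega⟩
    set C : ℝ := p * Real.exp (-a * ((m:ℝ) - (Δ:ℝ) + 1)) with hC
    set r : ℝ := Real.exp (-a) with hr
    have hr1 : r < 1 := by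
      rw [hr]
      exact Real.exp_lt_one_iff.mpr (by linarith)
    have hr0 : 0 ≤ r := Real.exp_nonneg _
    have hterm : ∀ k : ℕ, T.indicator (⇑L) (Δ - 1 - (k:ℤ)) = ENNReal.ofReal (C * r ^ k) := by
      intro k
      rw [Set.indicator_of_mem (show (Δ - 1 - (k:ℤ)) ∈ T by
        simp only [hTdef, Set.mem_setOf_eq]; omega), hL]
      congr 1
      have habs : |((Δ - 1 - (k:ℤ) : ℤ):ℝ) - (m:ℝ)| = ((m:ℝ) - (Δ:ℝ) + 1) + (k:ℝ) := by
        rw [abs_of_nonpos (by push_cast; have : (0:ℝ) ≤ (k:ℝ) := Nat.cast_nonneg k; linarith)]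
        push_cast; ring
      rw [habs]
      have hexp : Real.exp (-a * (((m:ℝ) - (Δ:ℝ) + 1) + (k:ℝ))) =
          Real.exp (-a * ((m:ℝ) - (Δ:ℝ) + 1)) * r ^ k := by
        rw [hr, ← Real.exp_nat_mul, ← Real.exp_add]
        congr 1
        ring
      rw [hexp, hC]
      ring
    have hsum : Summable (fun k : ℕ => C * r ^ k) :=
      (summable_geometric_of_lt_one hr0 hr1).mul_left C
    have hCpos : 0 ≤ C := by rw [hC]; positivity
    calc ∑' x : ℤ, T.indicator (⇑L) x
        = ∑' k : ℕ, T.indicator (⇑L) (Δ - 1 - (k:ℤ)) := (hg.tsum_eq hrange).symm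
      _ = ∑' k : ℕ, ENNReal.ofReal (C * r ^ k) := tsum_congr hterm
      _ = ENNReal.ofReal (∑' k : ℕ, C * r ^ k) :=
          (ENNReal.ofReal_tsum_of_nonneg (fun k => by positivity) hsum).symm
      _ ≤ ENNReal.ofReal δ := by
          apply ENNReal.ofReal_le_ofReal
          rw [tsum_mul_left, tsum_geometric_of_lt_one hr0 hr1]
          -- algebra: C * (1 - r)⁻¹ = exp(-a(m-Δ))/(e^a+1) ≤ δ
          set X : ℝ := Real.exp (-a * ((m:ℝ) - (Δ:ℝ))) with hX
          have hXE : Real.exp (-a * ((m:ℝ) - (Δ:ℝ) + 1)) = X * (Real.exp a)⁻¹ := by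
            rw [hX, ← Real.exp_neg, ← Real.exp_add]
            congr 1
            ring
          have hy : (0:ℝ) < (Real.exp a + 1) * δ := by positivity
          have hm1' : (m:ℝ) ≥ (Δ:ℝ) + (1/a) * (-Real.log ((Real.exp a + 1) * δ)) := by
            rwa [one_div ((Real.exp a + 1) * δ), Real.log_inv] at hm1
          have hlog : -Real.log ((Real.exp a + 1) * δ) ≤ a * ((m:ℝ) - (Δ:ℝ)) := by
            have h3 : (1/a) * (-Real.log ((Real.exp a + 1) * δ)) ≤ (m:ℝ) - (Δ:ℝ) := by linarith
            calc -Real.log ((Real.exp a + 1) * δ)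
                = a * ((1/a) * (-Real.log ((Real.exp a + 1) * δ))) := by
                  rw [← mul_assoc, mul_one_div, div_self ha0.ne', one_mul]
              _ ≤ a * ((m:ℝ) - (Δ:ℝ)) := mul_le_mul_of_nonneg_left h3 ha0.le
          have hXle : X ≤ (Real.exp a + 1) * δ := by
            rw [hX, ← Real.exp_log hy]
            apply Real.exp_le_exp.mpr
            rw [neg_mul]
            linarith
          have hEm1 : Real.exp a - 1 ≠ 0 := sub_ne_zero.mpr hE1.ne'
          have hEp1 : Real.exp a + 1 ≠ 0 := by positivity
          have heq : C * (1 - r)⁻¹ = X / (Real.exp a + 1) := by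
            rw [hC, hr, hXE, Real.exp_neg, hp]
            have h1 : (1 - (Real.exp a)⁻¹) = (Real.exp a - 1) / Real.exp a := by
              field_simp
            rw [h1, inv_div]
            field_simp
          rw [heq, div_le_iff₀ (by linarith)]
          linarith
  -- main chain
  have hshift : ∑' x : ℤ, A₂.indicator (⇑L) (x + (c₁ - c₂)) = ∑' x : ℤ, A₂.indicator (⇑L) x := by
    simpa using (Equiv.addRight (c₁ - c₂)).tsum_eq (A₂.indicator (⇑L))
  have hS : ∑' x : ℤ, S.indicator (⇑L) x ≤
      ENNReal.ofReal (Real.exp ε) * ∑' x : ℤ, A₂.indicator (⇑L) x := by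
    calc ∑' x : ℤ, S.indicator (⇑L) x
        ≤ ∑' x : ℤ, ENNReal.ofReal (Real.exp ε) * A₂.indicator (⇑L) (x + (c₁ - c₂)) := by
          apply ENNReal.tsum_le_tsum
          intro x
          by_cases hx : x ∈ S
          · rw [Set.indicator_of_mem hx,
              Set.indicator_of_mem (hmem x hx.2 hx.1)]
            exact key x
          · rw [Set.indicator_of_notMem hx]
            exact zero_le
      _ = ENNReal.ofReal (Real.exp ε) * ∑' x : ℤ, A₂.indicator (⇑L) (x + (c₁ - c₂)) :=
          ENNReal.tsum_mul_left
      _ = _ := by rw [hshift]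
  calc ∑' x : ℤ, A₁.indicator (⇑L) x
      ≤ ∑' x : ℤ, (S.indicator (⇑L) x + T.indicator (⇑L) x) := by
        apply ENNReal.tsum_le_tsum
        intro x
        by_cases h1 : x ∈ A₁
        · by_cases h2 : Δ ≤ x
          · have hxS : x ∈ S := Set.mem_inter h1 h2
            rw [Set.indicator_of_mem h1, Set.indicator_of_mem hxS]
            exact le_add_right le_rfl
          · have hxT : x ∈ T := by simp only [hTdef, Set.mem_setOf_eq]; omega
            rw [Set.indicator_of_mem h1, Set.indicator_of_mem hxT]
            exact le_add_left le_rfl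
        · rw [Set.indicator_of_notMem h1]
          exact zero_le
    _ = ∑' x : ℤ, S.indicator (⇑L) x + ∑' x : ℤ, T.indicator (⇑L) x := ENNReal.tsum_add
    _ ≤ ENNReal.ofReal (Real.exp ε) * ∑' x : ℤ, A₂.indicator (⇑L) x + ENNReal.ofReal δ :=
        add_le_add hS hT
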